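/- (Averaged radial equation for the walking-droplet model; Bessel product identity.) Define J₀(x) = (1/π)·∫₀^π cos(x·sin τ) dτ and J₁(x) = (1/π)·∫₀^π cos(τ − x·sin τ) dτ. Then for every r ∈ ℝ, (1/(2π))·∫₀^{2π} J₁(r·cos θ)·cos θ dθ = J₀(r/2)·J₁(r/2). -/

import Mathlib

open Real MeasureTheory Set

/-- Bessel function of the first kind of order 0, via its integral representation. -/
noncomputable def besselJ0 (x : ℝ) : ℝ :=
  (1 / Real.pi) * ∫ τ in (0:ℝ)..Real.pi, Real.cos (x * Real.sin τ)

/-- Bessel function of the first kind of order 1, via its integral representation. -/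
noncomputable def besselJ1 (x : ℝ) : ℝ :=
  (1 / Real.pi) * ∫ τ in (0:ℝ)..Real.pi, Real.cos (τ - x * Real.sin τ)

/-- Shift invariance of the integral of a `2π`-periodic function. -/
lemma per_shift {f : ℝ → ℝ} (hf : Function.Periodic f (2 * π)) (c : ℝ) :
    ∫ x in (0:ℝ)..2 * π, f (x + c) = ∫ x in (0:ℝ)..2 * π, f x := by
  rw [intervalIntegral.integral_comp_add_right]
  have h := hf.intervalIntegral_add_eq c 0
  rw [zero_add] at h
  rw [zero_add, add_comm (2 * π) c]
  exact h

/-- Reflection invariance of the integral of a `2π`-periodic function. -/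
lemma per_reflect {f : ℝ → ℝ} (hf : Function.Periodic f (2 * π)) (c : ℝ) :
    ∫ x in (0:ℝ)..2 * π, f (c - x) = ∫ x in (0:ℝ)..2 * π, f x := by
  rw [intervalIntegral.integral_comp_sub_left]
  have h := hf.intervalIntegral_add_eq (c - 2 * π) 0
  rw [zero_add, sub_add_cancel] at h
  rw [sub_zero]
  exact h

/-- Doubling for a function symmetric about `a` on `[0, 2a]`. -/
lemma double_symm {f : ℝ → ℝ} (a : ℝ) (hf : ∀ x, f (2 * a - x) = f x)
    (hi : ∀ c d : ℝ, IntervalIntegrable f volume c d) :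
    ∫ x in (0:ℝ)..2 * a, f x = 2 * ∫ x in (0:ℝ)..a, f x := by
  have h2 : ∫ x in a..2 * a, f x = ∫ x in (0:ℝ)..a, f x := by
    have h := intervalIntegral.integral_comp_sub_left (a := (0:ℝ)) (b := a) f (2 * a)
    rw [sub_zero, show 2 * a - a = a by ring] at h
    rw [← h]
    exact intervalIntegral.integral_congr fun x _ => (hf x)
  rw [← intervalIntegral.integral_add_adjacent_intervals (hi 0 a) (hi a (2 * a)), h2, two_mul]

lemma continuous_besselJ1 : Continuous besselJ1 := by
  have h : Continuous fun x : ℝ => ∫ t in (0:ℝ)..π, Real.cos (t - x * Real.sin t) :=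
    intervalIntegral.continuous_parametric_intervalIntegral_of_continuous' (by fun_prop) 0 π
  unfold besselJ1
  exact continuous_const.mul h

lemma J0_int (x : ℝ) :
    ∫ t in (0:ℝ)..2 * π, Real.cos (x * Real.sin t) = 2 * π * besselJ0 x := by
  have hsymm : ∀ t : ℝ, Real.cos (x * Real.sin (2 * π - t)) = Real.cos (x * Real.sin t) := by
    intro t
    rw [show (2 * π - t) = -(t - 2 * π) by ring, Real.sin_neg, Real.sin_sub_two_pi]
    rw [mul_neg, Real.cos_neg]
  have hd := double_symm π hsymm (fun c d => (by fun_prop : Continuous fun t : ℝ =>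
    Real.cos (x * Real.sin t)).intervalIntegrable c d)
  rw [hd]
  unfold besselJ0
  have hπ := Real.pi_ne_zero
  field_simp

lemma J1_int (x : ℝ) :
    ∫ t in (0:ℝ)..2 * π, Real.cos (t - x * Real.sin t) = 2 * π * besselJ1 x := by
  have hsymm : ∀ t : ℝ,
      Real.cos (2 * π - t - x * Real.sin (2 * π - t)) = Real.cos (t - x * Real.sin t) := by
    intro t
    rw [show (2 * π - t) = -(t - 2 * π) by ring, Real.sin_neg, Real.sin_sub_two_pi]
    rw [show -(t - 2*π) - x * -Real.sin t = -((t - x * Real.sin t) - 2*π) by ring,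
      Real.cos_neg, Real.cos_sub_two_pi]
  have hd := double_symm π hsymm (fun c d => (by fun_prop : Continuous fun t : ℝ =>
    Real.cos (t - x * Real.sin t)).intervalIntegrable c d)
  rw [hd]
  unfold besselJ1
  have hπ := Real.pi_ne_zero
  field_simp

lemma besselJ1_neg (x : ℝ) : besselJ1 (-x) = -besselJ1 x := by
  unfold besselJ1
  have key : ∫ t in (0:ℝ)..π, Real.cos (t - (-x) * Real.sin t)
      = ∫ t in (0:ℝ)..π, -Real.cos (t - x * Real.sin t) := by
    have h := intervalIntegral.integral_comp_sub_left (a := (0:ℝ)) (b := π)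
      (fun t => Real.cos (t - (-x) * Real.sin t)) π
    rw [sub_self, sub_zero] at h
    rw [← h]
    refine intervalIntegral.integral_congr fun t _ => ?_
    show Real.cos (π - t - (-x) * Real.sin (π - t)) = -Real.cos (t - x * Real.sin t)
    rw [Real.sin_pi_sub,
      show π - t - (-x) * Real.sin t = π - (t - x * Real.sin t) by ring, Real.cos_pi_sub]
  rw [key, intervalIntegral.integral_neg]
  ring

lemma sin_int_zero (w : ℝ) :
    ∫ u in (0:ℝ)..2 * π, Real.sin (u - w * Real.sin u) = 0 := by
  have h := intervalIntegral.integral_comp_sub_left (a := (0:ℝ)) (b := 2 * π)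
    (fun u => Real.sin (u - w * Real.sin u)) (2 * π)
  rw [sub_self, sub_zero] at h
  have h2 : ∀ t : ℝ, Real.sin (2 * π - t - w * Real.sin (2 * π - t))
      = -Real.sin (t - w * Real.sin t) := by
    intro t
    rw [show (2 * π - t) = -(t - 2 * π) by ring, Real.sin_neg, Real.sin_sub_two_pi]
    rw [show -(t - 2*π) - w * -Real.sin t = -((t - w * Real.sin t) - 2*π) by ring,
      Real.sin_neg, Real.sin_sub_two_pi]
  rw [intervalIntegral.integral_congr (g := fun t => -Real.sin (t - w * Real.sin t))
    (fun t _ => h2 t), intervalIntegral.integral_neg] at h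
  linarith [h]

lemma F1 (v w : ℝ) : ∫ u in (0:ℝ)..2 * π, Real.cos (u + v - w * Real.sin u)
    = 2 * π * besselJ1 w * Real.cos v := by
  have expand : ∀ u : ℝ, Real.cos (u + v - w * Real.sin u)
      = Real.cos (u - w * Real.sin u) * Real.cos v
        - Real.sin (u - w * Real.sin u) * Real.sin v := by
    intro u
    rw [show u + v - w * Real.sin u = (u - w * Real.sin u) + v by ring, Real.cos_add]
  rw [intervalIntegral.integral_congr (fun u _ => expand u),
    intervalIntegral.integral_sub
      (((by fun_prop : Continuous fun u : ℝ =>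
        Real.cos (u - w * Real.sin u) * Real.cos v)).intervalIntegrable _ _)
      (((by fun_prop : Continuous fun u : ℝ =>
        Real.sin (u - w * Real.sin u) * Real.sin v)).intervalIntegrable _ _),
    intervalIntegral.integral_mul_const, intervalIntegral.integral_mul_const,
    J1_int, sin_int_zero]
  ring

lemma F2 (v w : ℝ) : ∫ u in (0:ℝ)..2 * π, Real.cos (u + v - w * Real.cos u)
    = 2 * π * besselJ1 w * Real.sin v := by
  have hper : Function.Periodic (fun u => Real.cos (u + v - w * Real.cos u)) (2 * π) := by
    intro u
    simp only
    rw [Real.cos_add_two_pi,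
      show u + 2 * π + v - w * Real.cos u = (u + v - w * Real.cos u) + 2 * π by ring,
      Real.cos_add_two_pi]
  rw [← per_shift hper (π / 2)]
  have key : ∀ u : ℝ, Real.cos (u + π / 2 + v - w * Real.cos (u + π / 2))
      = Real.cos (u + (v + π / 2) - (-w) * Real.sin u) := by
    intro u
    rw [Real.cos_add_pi_div_two,
      show u + π/2 + v - w * -Real.sin u = u + (v + π/2) - (-w) * Real.sin u by ring]
  rw [intervalIntegral.integral_congr (fun u _ => key u), F1, besselJ1_neg,
    Real.cos_add_pi_div_two]
  ring

lemma swap_int {G : ℝ → ℝ → ℝ} (hG : Continuous fun p : ℝ × ℝ => G p.1 p.2) :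
    ∫ t in (0:ℝ)..2 * π, ∫ p in (0:ℝ)..2 * π, G t p
      = ∫ p in (0:ℝ)..2 * π, ∫ t in (0:ℝ)..2 * π, G t p := by
  have h2π : (0:ℝ) ≤ 2 * π := by positivity
  have hint : Integrable (Function.uncurry G)
      ((volume.restrict (Ioc (0:ℝ) (2 * π))).prod (volume.restrict (Ioc (0:ℝ) (2 * π)))) := by
    rw [Measure.prod_restrict]
    have : IntegrableOn (Function.uncurry G) (Icc (0:ℝ) (2*π) ×ˢ Icc (0:ℝ) (2*π))
        (volume.prod volume) := by
      apply hG.continuousOn.integrableOn_compact (isCompact_Icc.prod isCompact_Icc)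
    exact this.mono_set (Set.prod_mono Ioc_subset_Icc_self Ioc_subset_Icc_self)
  simp only [intervalIntegral.integral_of_le h2π]
  exact MeasureTheory.integral_integral_swap hint

lemma term_pipeline (f : ℝ → ℝ → ℝ) (hf : Continuous fun p : ℝ × ℝ => f p.1 p.2)
    (hper1 : ∀ t s, f (t + 2 * π) s = f t s) (hper2 : ∀ t s, f t (s + 2 * π) = f t s) :
    ∫ t in (0:ℝ)..2 * π, ∫ s in (0:ℝ)..2 * π, f t s
      = ∫ p in (0:ℝ)..2 * π, ∫ u in (0:ℝ)..2 * π, f (u + p / 2) (u - p / 2) := by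
  have step1 : ∀ t : ℝ, ∫ s in (0:ℝ)..2 * π, f t s = ∫ p in (0:ℝ)..2 * π, f t (t - p) :=
    fun t => (per_reflect (fun s => hper2 t s) t).symm
  rw [intervalIntegral.integral_congr (g := fun t => ∫ p in (0:ℝ)..2 * π, f t (t - p))
    (fun t _ => step1 t)]
  rw [swap_int (G := fun t p => f t (t - p)) (by fun_prop)]
  refine intervalIntegral.integral_congr fun p _ => ?_
  show ∫ t in (0:ℝ)..2 * π, f t (t - p) = _
  have hper : Function.Periodic (fun t => f t (t - p)) (2 * π) := by
    intro t
    simp only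
    rw [show t + 2 * π - p = (t - p) + 2 * π by ring, hper2, hper1]
  rw [← per_shift hper (p / 2)]
  refine intervalIntegral.integral_congr fun u _ => ?_
  show f (u + p / 2) (u + p / 2 - p) = f (u + p / 2) (u - p / 2)
  rw [show u + p / 2 - p = u - p / 2 by ring]

/-- **Averaged radial equation for the walking-droplet model (Bessel product
identity).** For every `r`,
`(1/(2π)) ∫₀^{2π} J₁(r cos θ) cos θ dθ = J₀(r/2) J₁(r/2)`. -/
theorem averaged_radial_equation (r : ℝ) :
    (1 / (2 * Real.pi)) *
        ∫ θ in (0:ℝ)..(2 * Real.pi), besselJ1 (r * Real.cos θ) * Real.cos θ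
      = besselJ0 (r / 2) * besselJ1 (r / 2) := by
  have hπ : (π:ℝ) ≠ 0 := Real.pi_ne_zero
  have hk : Continuous fun θ : ℝ => besselJ1 (r * Real.cos θ) * Real.cos θ :=
    (continuous_besselJ1.comp (by fun_prop)).mul Real.continuous_cos
  have hh : Continuous fun θ : ℝ => besselJ1 (r * Real.sin θ) * Real.sin θ :=
    (continuous_besselJ1.comp (by fun_prop)).mul Real.continuous_sin
  -- the half-period integral
  set C := ∫ θ in (0:ℝ)..π, besselJ1 (r * Real.cos θ) * Real.cos θ with hC
  -- Claim A : the full-period integral is `2 * C`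
  have claimA : ∫ θ in (0:ℝ)..2 * π, besselJ1 (r * Real.cos θ) * Real.cos θ = 2 * C := by
    refine double_symm π (fun θ => ?_) (fun c d => hk.intervalIntegrable c d)
    rw [show 2 * π - θ = -(θ - 2 * π) by ring, Real.cos_neg, Real.cos_sub_two_pi]
  -- Claim B : the `sin` analogue of `C` equals `C`
  have hcos_symm : ∀ θ : ℝ,
      besselJ1 (r * Real.cos (2 * (π/2) - θ)) * Real.cos (2 * (π/2) - θ)
        = besselJ1 (r * Real.cos θ) * Real.cos θ := by
    intro θ
    rw [show 2 * (π/2) - θ = π - θ by ring, Real.cos_pi_sub,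
      show r * -Real.cos θ = -(r * Real.cos θ) by ring, besselJ1_neg]
    ring
  have hsin_symm : ∀ θ : ℝ,
      besselJ1 (r * Real.sin (2 * (π/2) - θ)) * Real.sin (2 * (π/2) - θ)
        = besselJ1 (r * Real.sin θ) * Real.sin θ := by
    intro θ
    rw [show 2 * (π/2) - θ = π - θ by ring, Real.sin_pi_sub]
  have hBcos := double_symm (π/2) hcos_symm (fun c d => hk.intervalIntegrable c d)
  have hBsin := double_symm (π/2) hsin_symm (fun c d => hh.intervalIntegrable c d)
  rw [show 2 * (π/2) = π by ring] at hBcos hBsin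
  have hquarter : ∫ θ in (0:ℝ)..π/2, besselJ1 (r * Real.sin θ) * Real.sin θ
      = ∫ θ in (0:ℝ)..π/2, besselJ1 (r * Real.cos θ) * Real.cos θ := by
    have h := intervalIntegral.integral_comp_sub_left (a := (0:ℝ)) (b := π/2)
      (fun θ => besselJ1 (r * Real.cos θ) * Real.cos θ) (π/2)
    rw [sub_self, sub_zero] at h
    rw [← h]
    refine intervalIntegral.integral_congr fun θ _ => ?_
    show besselJ1 (r * Real.sin θ) * Real.sin θ
      = besselJ1 (r * Real.cos (π/2 - θ)) * Real.cos (π/2 - θ)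
    rw [Real.cos_pi_div_two_sub]
  have claimB : ∫ θ in (0:ℝ)..π, besselJ1 (r * Real.sin θ) * Real.sin θ = C := by
    rw [hBsin, hquarter, ← hBcos]
  -- Term 1
  have T1 : ∫ t in (0:ℝ)..2 * π, ∫ s in (0:ℝ)..2 * π,
      Real.cos (t - r/2 * Real.sin t - r/2 * Real.sin s) = 4 * π * C := by
    rw [term_pipeline (fun t s => Real.cos (t - r/2 * Real.sin t - r/2 * Real.sin s))
      (by fun_prop)
      (fun t s => by
        rw [Real.sin_add_two_pi,
          show t + 2*π - r/2 * Real.sin t - r/2 * Real.sin s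
            = (t - r/2 * Real.sin t - r/2 * Real.sin s) + 2*π by ring, Real.cos_add_two_pi])
      (fun t s => by simp only [Real.sin_add_two_pi])]
    have hinner : ∀ p : ℝ, ∫ u in (0:ℝ)..2 * π,
        Real.cos (u + p/2 - r/2 * Real.sin (u + p/2) - r/2 * Real.sin (u - p/2))
          = 2 * π * besselJ1 (r * Real.cos (p/2)) * Real.cos (p/2) := by
      intro p
      have key : ∀ u : ℝ,
          Real.cos (u + p/2 - r/2 * Real.sin (u + p/2) - r/2 * Real.sin (u - p/2))
            = Real.cos (u + p/2 - (r * Real.cos (p/2)) * Real.sin u) := by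
        intro u
        congr 1
        rw [Real.sin_add, Real.sin_sub]
        ring
      rw [intervalIntegral.integral_congr (fun u _ => key u), F1]
    rw [intervalIntegral.integral_congr
      (g := fun p => 2 * π * besselJ1 (r * Real.cos (p/2)) * Real.cos (p/2))
      (fun p _ => hinner p)]
    have hdiv := intervalIntegral.integral_comp_div (a := (0:ℝ)) (b := 2 * π) (c := (2:ℝ))
      (f := fun θ => 2 * π * besselJ1 (r * Real.cos θ) * Real.cos θ) two_ne_zero
    rw [zero_div, show (2 * π) / 2 = π by ring, smul_eq_mul] at hdiv
    rw [hdiv]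
    have hpull : ∫ θ in (0:ℝ)..π, 2 * π * besselJ1 (r * Real.cos θ) * Real.cos θ
        = 2 * π * C := by
      rw [hC, ← intervalIntegral.integral_const_mul]
      exact intervalIntegral.integral_congr fun θ _ => by ring
    rw [hpull]
    ring
  -- Term 2
  have T2 : ∫ t in (0:ℝ)..2 * π, ∫ s in (0:ℝ)..2 * π,
      Real.cos (t - r/2 * Real.sin t + r/2 * Real.sin s) = 4 * π * C := by
    rw [term_pipeline (fun t s => Real.cos (t - r/2 * Real.sin t + r/2 * Real.sin s))
      (by fun_prop)
      (fun t s => by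
        rw [Real.sin_add_two_pi,
          show t + 2*π - r/2 * Real.sin t + r/2 * Real.sin s
            = (t - r/2 * Real.sin t + r/2 * Real.sin s) + 2*π by ring, Real.cos_add_two_pi])
      (fun t s => by simp only [Real.sin_add_two_pi])]
    have hinner : ∀ p : ℝ, ∫ u in (0:ℝ)..2 * π,
        Real.cos (u + p/2 - r/2 * Real.sin (u + p/2) + r/2 * Real.sin (u - p/2))
          = 2 * π * besselJ1 (r * Real.sin (p/2)) * Real.sin (p/2) := by
      intro p
      have key : ∀ u : ℝ,
          Real.cos (u + p/2 - r/2 * Real.sin (u + p/2) + r/2 * Real.sin (u - p/2))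
            = Real.cos (u + p/2 - (r * Real.sin (p/2)) * Real.cos u) := by
        intro u
        congr 1
        rw [Real.sin_add, Real.sin_sub]
        ring
      rw [intervalIntegral.integral_congr (fun u _ => key u), F2]
    rw [intervalIntegral.integral_congr
      (g := fun p => 2 * π * besselJ1 (r * Real.sin (p/2)) * Real.sin (p/2))
      (fun p _ => hinner p)]
    have hdiv := intervalIntegral.integral_comp_div (a := (0:ℝ)) (b := 2 * π) (c := (2:ℝ))
      (f := fun θ => 2 * π * besselJ1 (r * Real.sin θ) * Real.sin θ) two_ne_zero
    rw [zero_div, show (2 * π) / 2 = π by ring, smul_eq_mul] at hdiv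
    rw [hdiv]
    have hpull : ∫ θ in (0:ℝ)..π, 2 * π * besselJ1 (r * Real.sin θ) * Real.sin θ
        = 2 * π * C := by
      rw [← claimB, ← intervalIntegral.integral_const_mul]
      exact intervalIntegral.integral_congr fun θ _ => by ring
    rw [hpull]
    ring
  -- The product as a double integral
  have hAB : ∫ t in (0:ℝ)..2 * π, ∫ s in (0:ℝ)..2 * π,
      Real.cos (t - r/2 * Real.sin t) * Real.cos (r/2 * Real.sin s)
        = (2 * π * besselJ1 (r/2)) * (2 * π * besselJ0 (r/2)) := by
    have hinner : ∀ t : ℝ, ∫ s in (0:ℝ)..2 * π,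
        Real.cos (t - r/2 * Real.sin t) * Real.cos (r/2 * Real.sin s)
          = Real.cos (t - r/2 * Real.sin t) * (2 * π * besselJ0 (r/2)) := by
      intro t
      rw [intervalIntegral.integral_const_mul, J0_int]
    rw [intervalIntegral.integral_congr
      (g := fun t => Real.cos (t - r/2 * Real.sin t) * (2 * π * besselJ0 (r/2)))
      (fun t _ => hinner t),
      intervalIntegral.integral_mul_const, J1_int]
  -- Product-to-sum splitting
  have hsplit : ∫ t in (0:ℝ)..2 * π, ∫ s in (0:ℝ)..2 * π,
      Real.cos (t - r/2 * Real.sin t) * Real.cos (r/2 * Real.sin s)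
        = (1/2) * ((∫ t in (0:ℝ)..2 * π, ∫ s in (0:ℝ)..2 * π,
            Real.cos (t - r/2 * Real.sin t - r/2 * Real.sin s))
          + (∫ t in (0:ℝ)..2 * π, ∫ s in (0:ℝ)..2 * π,
            Real.cos (t - r/2 * Real.sin t + r/2 * Real.sin s))) := by
    have hinner : ∀ t : ℝ, ∫ s in (0:ℝ)..2 * π,
        Real.cos (t - r/2 * Real.sin t) * Real.cos (r/2 * Real.sin s)
          = (1/2) * ((∫ s in (0:ℝ)..2 * π,
              Real.cos (t - r/2 * Real.sin t - r/2 * Real.sin s))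
            + (∫ s in (0:ℝ)..2 * π,
              Real.cos (t - r/2 * Real.sin t + r/2 * Real.sin s))) := by
      intro t
      rw [← intervalIntegral.integral_add
        ((by fun_prop : Continuous fun s : ℝ =>
          Real.cos (t - r/2 * Real.sin t - r/2 * Real.sin s)).intervalIntegrable _ _)
        ((by fun_prop : Continuous fun s : ℝ =>
          Real.cos (t - r/2 * Real.sin t + r/2 * Real.sin s)).intervalIntegrable _ _),
        ← intervalIntegral.integral_const_mul]
      refine intervalIntegral.integral_congr fun s _ => ?_
      show Real.cos (t - r/2 * Real.sin t) * Real.cos (r/2 * Real.sin s) = _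
      have := Real.two_mul_cos_mul_cos (t - r/2 * Real.sin t) (r/2 * Real.sin s)
      rw [show t - r/2 * Real.sin t - r/2 * Real.sin s
        = (t - r/2 * Real.sin t) - r/2 * Real.sin s by ring] at *
      linarith [this]
    rw [intervalIntegral.integral_congr (fun t _ => hinner t)]
    have c1 : Continuous fun t : ℝ => ∫ s in (0:ℝ)..2 * π,
        Real.cos (t - r/2 * Real.sin t - r/2 * Real.sin s) :=
      intervalIntegral.continuous_parametric_intervalIntegral_of_continuous'
        (by fun_prop) 0 (2 * π)
    have c2 : Continuous fun t : ℝ => ∫ s in (0:ℝ)..2 * π,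
        Real.cos (t - r/2 * Real.sin t + r/2 * Real.sin s) :=
      intervalIntegral.continuous_parametric_intervalIntegral_of_continuous'
        (by fun_prop) 0 (2 * π)
    rw [intervalIntegral.integral_const_mul, intervalIntegral.integral_add
      (c1.intervalIntegrable _ _) (c2.intervalIntegrable _ _)]
  -- Assemble
  have h4 : (2 * π * besselJ1 (r/2)) * (2 * π * besselJ0 (r/2)) = 4 * π * C := by
    rw [← hAB, hsplit, T1, T2]
    ring
  have h5 : (4 * π) * (π * (besselJ0 (r/2) * besselJ1 (r/2))) = (4 * π) * C := by
    rw [← h4]; ring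
  have h6 : π * (besselJ0 (r/2) * besselJ1 (r/2)) = C :=
    mul_left_cancel₀ (by positivity : (4:ℝ) * π ≠ 0) h5
  rw [claimA, ← h6]
  field_simp
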